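/- Let H be a semistable directed multigraph and let H' be obtained from H by contracting a contractible edge e = uv. Then the map sending a linear subgraph L of H to L itself (if e ∉ L) or to L with e contracted (if e ∈ L) is a bijection from the set of linear subgraphs of H to the set of linear subgraphs of H', and it preserves the number of connected components. -/

import Mathlib

open Relation

structure MDigraph where
  V : Type
  E : Type
  [hV : Finite V]
  [hE : Finite E]
  src : E → V
  tgt : E → V

attribute [instance] MDigraph.hV MDigraph.hE

namespace MDigraph

noncomputable def degOut (G : MDigraph) (v : G.V) : ℕ := Nat.card {e : G.E // G.src e = v}
noncomputable def degIn (G : MDigraph) (v : G.V) : ℕ := Nat.card {e : G.E // G.tgt e = v}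

def Semistable (G : MDigraph) : Prop :=
  ∀ v : G.V, 1 ≤ G.degIn v ∧ 1 ≤ G.degOut v ∧ 3 ≤ G.degIn v + G.degOut v

def Stable (G : MDigraph) : Prop :=
  ∀ v : G.V, 2 ≤ G.degIn v ∧ 2 ≤ G.degOut v

def Contractible (G : MDigraph) (e : G.E) : Prop :=
  G.src e ≠ G.tgt e ∧ (G.degOut (G.src e) = 1 ∨ G.degIn (G.tgt e) = 1)

def mergeRel (G : MDigraph) (e0 : G.E) (a b : G.V) : Prop :=
  a = b ∨ ((a = G.src e0 ∨ a = G.tgt e0) ∧ (b = G.src e0 ∨ b = G.tgt e0))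

def contract (G : MDigraph) (e0 : G.E) : MDigraph where
  V := Quot (G.mergeRel e0)
  E := {e : G.E // e ≠ e0}
  src e := Quot.mk _ (G.src e.1)
  tgt e := Quot.mk _ (G.tgt e.1)

structure Iso (G H : MDigraph) where
  vEquiv : G.V ≃ H.V
  eEquiv : G.E ≃ H.E
  src_map : ∀ e, H.src (eEquiv e) = vEquiv (G.src e)
  tgt_map : ∀ e, H.tgt (eEquiv e) = vEquiv (G.tgt e)

def Adj (G : MDigraph) (a b : G.V) : Prop := ∃ e, G.src e = a ∧ G.tgt e = b

def Strong (G : MDigraph) : Prop := ∀ a b : G.V, ReflTransGen G.Adj a b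

def ContractStep (G H : MDigraph) : Prop :=
  ∃ e0 : G.E, G.Contractible e0 ∧ Nonempty (Iso (G.contract e0) H)

def IsStabilization (G H : MDigraph) : Prop :=
  ReflTransGen ContractStep G H ∧ H.Stable

def Stabilizable (G : MDigraph) : Prop := ∃ H, G.IsStabilization H

def IsLinear (G : MDigraph) (L : Set G.E) : Prop :=
  ∀ v : G.V, Nat.card {e : G.E // e ∈ L ∧ G.src e = v} = Nat.card {e : G.E // e ∈ L ∧ G.tgt e = v}
    ∧ Nat.card {e : G.E // e ∈ L ∧ G.src e = v} ≤ 1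

def LAdj (G : MDigraph) (L : Set G.E) (a b : G.V) : Prop := ∃ e ∈ L, G.src e = a ∧ G.tgt e = b

def supp (G : MDigraph) (L : Set G.E) : Set G.V := {v | ∃ e ∈ L, G.src e = v ∨ G.tgt e = v}

noncomputable def components (G : MDigraph) (L : Set G.E) : ℕ :=
  Nat.card (Quot (fun a b : G.supp L => G.LAdj L a.1 b.1))

noncomputable def adjMatrix (G : MDigraph) : Matrix G.V G.V ℤ :=
  Matrix.of fun a b => (Nat.card {e : G.E // G.src e = a ∧ G.tgt e = b} : ℤ)

open Classical in
noncomputable def detIA (G : MDigraph) : ℤ :=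
  letI := Fintype.ofFinite G.V
  ((1 : Matrix G.V G.V ℤ) - G.adjMatrix).det

noncomputable def weight (G : MDigraph) : ℤ := (Nat.card G.E : ℤ) - (Nat.card G.V : ℤ)

noncomputable def numLinear (G : MDigraph) : ℕ := Nat.card {L : Set G.E // G.IsLinear L}

end MDigraph

noncomputable example (G : MDigraph) (C : ℤ) : ℤ := ∑ᶠ L : {L : Set G.E // G.IsLinear L}, C ^ G.components L.1

section
variable {α : Type} [Finite α]

lemma card_or_disj (P Q : α → Prop) (h : ∀ x, ¬ (P x ∧ Q x)) :
    Nat.card {x // P x ∨ Q x} = Nat.card {x // P x} + Nat.card {x // Q x} := by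
  classical
  letI := Fintype.ofFinite α
  simp only [Nat.card_eq_fintype_card, Fintype.card_subtype]
  rw [Finset.filter_or, Finset.card_union_of_disjoint]
  rw [Finset.disjoint_filter]
  exact fun x _ hp hq => h x ⟨hp, hq⟩

lemma card_remove (P : α → Prop) (a : α) (ha : P a) :
    Nat.card {x // P x} = Nat.card {x // x ≠ a ∧ P x} + 1 := by
  classical
  letI := Fintype.ofFinite α
  simp only [Nat.card_eq_fintype_card, Fintype.card_subtype]
  have : Finset.filter (fun x => x ≠ a ∧ P x) Finset.univ
      = (Finset.filter (fun x => P x) Finset.univ).erase a := by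
    ext x; simp [Finset.mem_erase, and_comm]
  rw [this, Finset.card_erase_of_mem (by simp [ha])]
  have hpos : 0 < (Finset.filter (fun x => P x) Finset.univ).card :=
    Finset.card_pos.mpr ⟨a, by simp [ha]⟩
  omega

lemma card_no_remove (P : α → Prop) (a : α) (ha : ¬ P a) :
    Nat.card {x // x ≠ a ∧ P x} = Nat.card {x // P x} := by
  apply Nat.card_congr
  exact Equiv.subtypeEquivRight (fun x => ⟨fun h => h.2, fun h => ⟨fun he => ha (he ▸ h), h⟩⟩)

lemma card_empty_of (P : α → Prop) (h : ∀ x, ¬ P x) : Nat.card {x // P x} = 0 := by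
  have : IsEmpty {x // P x} := ⟨fun x => h x.1 x.2⟩
  simp [Nat.card_eq_zero]

lemma card_unique_of (P : α → Prop) (a : α) (ha : P a) (h : ∀ x, P x → x = a) :
    Nat.card {x // P x} = 1 := by
  have : Nonempty {x // P x} := ⟨⟨a, ha⟩⟩
  have : Subsingleton {x // P x} := ⟨fun x y => Subtype.ext ((h x.1 x.2).trans (h y.1 y.2).symm)⟩
  exact Nat.card_unique

lemma exists_of_card_eq_one (P : α → Prop) (h : Nat.card {x // P x} = 1) : ∃ x, P x := by
  have : Nonempty {x // P x} := Nat.card_pos_iff.mp (h ▸ Nat.one_pos) |>.1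
  obtain ⟨x, hx⟩ := this
  exact ⟨x, hx⟩

lemma forall_of_card_eq_zero (P : α → Prop) (h : Nat.card {x // P x} = 0) : ∀ x, ¬ P x := by
  rw [Nat.card_eq_zero] at h
  rcases h with h | h
  · exact fun x hx => h.false ⟨x, hx⟩
  · exact absurd h (not_infinite_iff_finite.mpr inferInstance)

end

namespace MDigraph
variable (H : MDigraph) (e0 : H.E)

lemma mergeRel_equivalence : Equivalence (H.mergeRel e0) := by
  constructor
  · exact fun a => Or.inl rfl
  · rintro a b (rfl | ⟨h1, h2⟩)
    · exact Or.inl rfl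
    · exact Or.inr ⟨h2, h1⟩
  · rintro a b c (rfl | ⟨h1, h2⟩) (rfl | ⟨h3, h4⟩)
    · exact Or.inl rfl
    · exact Or.inr ⟨h3, h4⟩
    · exact Or.inr ⟨h1, h2⟩
    · exact Or.inr ⟨h1, h4⟩

lemma quot_mk_eq {a b : H.V} :
    (Quot.mk (H.mergeRel e0) a = Quot.mk (H.mergeRel e0) b) ↔ H.mergeRel e0 a b :=
  Quot.eq.trans (mergeRel_equivalence H e0).eqvGen_iff

lemma mergeRel_of_ne (v : H.V) (h1 : v ≠ H.src e0) (h2 : v ≠ H.tgt e0) (a : H.V) :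
    H.mergeRel e0 a v ↔ a = v := by
  constructor
  · rintro (rfl | ⟨_, rfl | rfl⟩)
    · rfl
    · exact absurd rfl h1
    · exact absurd rfl h2
  · exact fun h => Or.inl h

lemma mergeRel_src (a : H.V) :
    H.mergeRel e0 a (H.src e0) ↔ (a = H.src e0 ∨ a = H.tgt e0) := by
  constructor
  · rintro (rfl | ⟨h, _⟩)
    · exact Or.inl rfl
    · exact h
  · exact fun h => Or.inr ⟨h, Or.inl rfl⟩

lemma card_src_class (M : Set H.E) (v : H.V) :
    Nat.card {e : (H.contract e0).E // e.1 ∈ M ∧ (H.contract e0).src e = Quot.mk (H.mergeRel e0) v}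
      = Nat.card {e : H.E // e ≠ e0 ∧ (e ∈ M ∧ H.mergeRel e0 (H.src e) v)} := by
  have h1 : Nat.card {e : (H.contract e0).E // e.1 ∈ M ∧ (H.contract e0).src e = Quot.mk (H.mergeRel e0) v}
      = Nat.card {e : (H.contract e0).E // e.1 ∈ M ∧ H.mergeRel e0 (H.src e.1) v} :=
    Nat.card_congr (Equiv.subtypeEquivRight fun e =>
      and_congr_right fun _ => quot_mk_eq H e0)
  rw [h1]
  exact Nat.card_congr (Equiv.subtypeSubtypeEquivSubtypeInter (fun e : H.E => e ≠ e0)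
    (fun e => e ∈ M ∧ H.mergeRel e0 (H.src e) v))

lemma card_tgt_class (M : Set H.E) (v : H.V) :
    Nat.card {e : (H.contract e0).E // e.1 ∈ M ∧ (H.contract e0).tgt e = Quot.mk (H.mergeRel e0) v}
      = Nat.card {e : H.E // e ≠ e0 ∧ (e ∈ M ∧ H.mergeRel e0 (H.tgt e) v)} := by
  have h1 : Nat.card {e : (H.contract e0).E // e.1 ∈ M ∧ (H.contract e0).tgt e = Quot.mk (H.mergeRel e0) v}
      = Nat.card {e : (H.contract e0).E // e.1 ∈ M ∧ H.mergeRel e0 (H.tgt e.1) v} :=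
    Nat.card_congr (Equiv.subtypeEquivRight fun e =>
      and_congr_right fun _ => quot_mk_eq H e0)
  rw [h1]
  exact Nat.card_congr (Equiv.subtypeSubtypeEquivSubtypeInter (fun e : H.E => e ≠ e0)
    (fun e => e ∈ M ∧ H.mergeRel e0 (H.tgt e) v))

lemma card_src_unmerged (M : Set H.E) (v : H.V) (h1 : v ≠ H.src e0) (h2 : v ≠ H.tgt e0) :
    Nat.card {e : (H.contract e0).E // e.1 ∈ M ∧ (H.contract e0).src e = Quot.mk (H.mergeRel e0) v}
      = Nat.card {e : H.E // e ∈ M ∧ H.src e = v} := by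
  rw [card_src_class]
  apply Nat.card_congr
  apply Equiv.subtypeEquivRight
  intro e
  rw [mergeRel_of_ne H e0 v h1 h2]
  constructor
  · exact fun h => h.2
  · rintro ⟨hm, hv⟩
    exact ⟨fun he => h1 (by rw [← hv, he]), hm, hv⟩

lemma card_tgt_unmerged (M : Set H.E) (v : H.V) (h1 : v ≠ H.src e0) (h2 : v ≠ H.tgt e0) :
    Nat.card {e : (H.contract e0).E // e.1 ∈ M ∧ (H.contract e0).tgt e = Quot.mk (H.mergeRel e0) v}
      = Nat.card {e : H.E // e ∈ M ∧ H.tgt e = v} := by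
  rw [card_tgt_class]
  apply Nat.card_congr
  apply Equiv.subtypeEquivRight
  intro e
  rw [mergeRel_of_ne H e0 v h1 h2]
  constructor
  · exact fun h => h.2
  · rintro ⟨hm, hv⟩
    exact ⟨fun he => h2 (by rw [← hv, he]), hm, hv⟩


lemma class_t_eq_s : Quot.mk (H.mergeRel e0) (H.tgt e0) = Quot.mk (H.mergeRel e0) (H.src e0) :=
  Quot.sound (Or.inr ⟨Or.inr rfl, Or.inl rfl⟩)

lemma out_unique (hA : H.degOut (H.src e0) = 1) (e : H.E) (he : H.src e = H.src e0) : e = e0 := by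
  have h : Subsingleton {e : H.E // H.src e = H.src e0} ∧ Nonempty {e : H.E // H.src e = H.src e0} :=
    Nat.card_eq_one_iff_unique.mp hA
  exact congrArg Subtype.val (h.1.allEq ⟨e, he⟩ ⟨e0, rfl⟩)

lemma in_unique (hB : H.degIn (H.tgt e0) = 1) (e : H.E) (he : H.tgt e = H.tgt e0) : e = e0 := by
  have h : Subsingleton {e : H.E // H.tgt e = H.tgt e0} ∧ Nonempty {e : H.E // H.tgt e = H.tgt e0} :=
    Nat.card_eq_one_iff_unique.mp hB
  exact congrArg Subtype.val (h.1.allEq ⟨e, he⟩ ⟨e0, rfl⟩)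

open Classical in
lemma oM_s_A (hA : H.degOut (H.src e0) = 1) (M : Set H.E) :
    Nat.card {e : H.E // e ∈ M ∧ H.src e = H.src e0} = if e0 ∈ M then 1 else 0 := by
  split_ifs with he
  · exact card_unique_of _ e0 ⟨he, rfl⟩ (fun e h => out_unique H e0 hA e h.2)
  · exact card_empty_of _ (fun e h => he ((out_unique H e0 hA e h.2) ▸ h.1))

open Classical in
lemma iM_t_B (hB : H.degIn (H.tgt e0) = 1) (M : Set H.E) :
    Nat.card {e : H.E // e ∈ M ∧ H.tgt e = H.tgt e0} = if e0 ∈ M then 1 else 0 := by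
  split_ifs with he
  · exact card_unique_of _ e0 ⟨he, rfl⟩ (fun e h => in_unique H e0 hB e h.2)
  · exact card_empty_of _ (fun e h => he ((in_unique H e0 hB e h.2) ▸ h.1))

lemma card_src_merged_A (hst : H.src e0 ≠ H.tgt e0) (hA : H.degOut (H.src e0) = 1) (M : Set H.E) :
    Nat.card {e : (H.contract e0).E // e.1 ∈ M ∧ (H.contract e0).src e = Quot.mk (H.mergeRel e0) (H.src e0)}
      = Nat.card {e : H.E // e ∈ M ∧ H.src e = H.tgt e0} := by
  rw [card_src_class]
  apply Nat.card_congr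
  apply Equiv.subtypeEquivRight
  intro e
  rw [mergeRel_src]
  constructor
  · rintro ⟨hne, hm, (hs | ht)⟩
    · exact absurd (out_unique H e0 hA e hs) hne
    · exact ⟨hm, ht⟩
  · rintro ⟨hm, ht⟩
    exact ⟨fun h => hst (h ▸ ht), hm, Or.inr ht⟩

lemma card_tgt_merged_B (hst : H.src e0 ≠ H.tgt e0) (hB : H.degIn (H.tgt e0) = 1) (M : Set H.E) :
    Nat.card {e : (H.contract e0).E // e.1 ∈ M ∧ (H.contract e0).tgt e = Quot.mk (H.mergeRel e0) (H.src e0)}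
      = Nat.card {e : H.E // e ∈ M ∧ H.tgt e = H.src e0} := by
  rw [card_tgt_class]
  apply Nat.card_congr
  apply Equiv.subtypeEquivRight
  intro e
  rw [mergeRel_src]
  constructor
  · rintro ⟨hne, hm, (hs | ht)⟩
    · exact ⟨hm, hs⟩
    · exact absurd (in_unique H e0 hB e ht) hne
  · rintro ⟨hm, hs⟩
    exact ⟨fun h => hst (h ▸ hs).symm, hm, Or.inl hs⟩

/-- Split of the merged tgt-count, valid for any M. -/
lemma card_tgt_merged_split (hst : H.src e0 ≠ H.tgt e0) (M : Set H.E) :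
    Nat.card {e : (H.contract e0).E // e.1 ∈ M ∧ (H.contract e0).tgt e = Quot.mk (H.mergeRel e0) (H.src e0)}
      = Nat.card {e : H.E // e ∈ M ∧ H.tgt e = H.src e0}
        + Nat.card {e : H.E // e ≠ e0 ∧ (e ∈ M ∧ H.tgt e = H.tgt e0)} := by
  rw [card_tgt_class]
  have h1 : Nat.card {e : H.E // e ≠ e0 ∧ (e ∈ M ∧ H.mergeRel e0 (H.tgt e) (H.src e0))}
      = Nat.card {e : H.E // (e ≠ e0 ∧ (e ∈ M ∧ H.tgt e = H.src e0))
          ∨ (e ≠ e0 ∧ (e ∈ M ∧ H.tgt e = H.tgt e0))} := by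
    apply Nat.card_congr
    apply Equiv.subtypeEquivRight
    intro e
    rw [mergeRel_src]
    tauto
  rw [h1, card_or_disj]
  · congr 1
    apply card_no_remove
    intro h
    exact hst h.2.symm
  · rintro e ⟨⟨_, _, h1⟩, ⟨_, _, h2⟩⟩
    exact hst (h1 ▸ h2 ▸ rfl)

lemma card_src_merged_split (hst : H.src e0 ≠ H.tgt e0) (M : Set H.E) :
    Nat.card {e : (H.contract e0).E // e.1 ∈ M ∧ (H.contract e0).src e = Quot.mk (H.mergeRel e0) (H.src e0)}
      = Nat.card {e : H.E // e ≠ e0 ∧ (e ∈ M ∧ H.src e = H.src e0)}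
        + Nat.card {e : H.E // e ∈ M ∧ H.src e = H.tgt e0} := by
  rw [card_src_class]
  have h1 : Nat.card {e : H.E // e ≠ e0 ∧ (e ∈ M ∧ H.mergeRel e0 (H.src e) (H.src e0))}
      = Nat.card {e : H.E // (e ≠ e0 ∧ (e ∈ M ∧ H.src e = H.src e0))
          ∨ (e ≠ e0 ∧ (e ∈ M ∧ H.src e = H.tgt e0))} := by
    apply Nat.card_congr
    apply Equiv.subtypeEquivRight
    intro e
    rw [mergeRel_src]
    tauto
  rw [h1, card_or_disj]
  · congr 1
    apply card_no_remove
    intro h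
    exact hst h.2
  · rintro e ⟨⟨_, _, h1⟩, ⟨_, _, h2⟩⟩
    exact hst (h1 ▸ h2 ▸ rfl)


open Classical in
lemma card_tgt_merged_A (hst : H.src e0 ≠ H.tgt e0) (hA : H.degOut (H.src e0) = 1) (M : Set H.E)
    (hMs : Nat.card {e : H.E // e ∈ M ∧ H.src e = H.src e0}
      = Nat.card {e : H.E // e ∈ M ∧ H.tgt e = H.src e0}) :
    Nat.card {e : (H.contract e0).E // e.1 ∈ M ∧ (H.contract e0).tgt e = Quot.mk (H.mergeRel e0) (H.src e0)}
      = Nat.card {e : H.E // e ∈ M ∧ H.tgt e = H.tgt e0} := by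
  rw [card_tgt_merged_split H e0 hst M]
  have hos := oM_s_A H e0 hA M
  by_cases he : e0 ∈ M
  · rw [if_pos he] at hos
    have hrem := card_remove (fun e => e ∈ M ∧ H.tgt e = H.tgt e0) e0 ⟨he, rfl⟩
    beta_reduce at hrem
    omega
  · rw [if_neg he] at hos
    have hrem := card_no_remove (fun e => e ∈ M ∧ H.tgt e = H.tgt e0) e0 (fun h => he h.1)
    beta_reduce at hrem
    omega

open Classical in
lemma card_src_merged_B' (hst : H.src e0 ≠ H.tgt e0) (hB : H.degIn (H.tgt e0) = 1) (M : Set H.E)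
    (hMt : Nat.card {e : H.E // e ∈ M ∧ H.src e = H.tgt e0}
      = Nat.card {e : H.E // e ∈ M ∧ H.tgt e = H.tgt e0}) :
    Nat.card {e : (H.contract e0).E // e.1 ∈ M ∧ (H.contract e0).src e = Quot.mk (H.mergeRel e0) (H.src e0)}
      = Nat.card {e : H.E // e ∈ M ∧ H.src e = H.src e0} := by
  rw [card_src_merged_split H e0 hst M]
  have hit := iM_t_B H e0 hB M
  by_cases he : e0 ∈ M
  · rw [if_pos he] at hit
    have hrem := card_remove (fun e => e ∈ M ∧ H.src e = H.src e0) e0 ⟨he, rfl⟩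
    beta_reduce at hrem
    omega
  · rw [if_neg he] at hit
    have hrem := card_no_remove (fun e => e ∈ M ∧ H.src e = H.src e0) e0 (fun h => he h.1)
    beta_reduce at hrem
    omega

lemma isLinear_contract (hc : H.Contractible e0) (M : Set H.E) (hM : H.IsLinear M) :
    (H.contract e0).IsLinear {e | e.1 ∈ M} := by
  obtain ⟨hst, hAB⟩ := hc
  intro x
  induction x using Quot.ind with
  | _ v =>
  simp only [Set.mem_setOf_eq]
  by_cases hv1 : v = H.src e0
  case pos =>
    subst hv1
    rcases hAB with hA | hB
    · refine ⟨?_, ?_⟩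
      · rw [card_src_merged_A H e0 hst hA M, card_tgt_merged_A H e0 hst hA M (hM (H.src e0)).1]
        exact (hM (H.tgt e0)).1
      · rw [card_src_merged_A H e0 hst hA M]
        exact (hM (H.tgt e0)).2
    · refine ⟨?_, ?_⟩
      · rw [card_src_merged_B' H e0 hst hB M (hM (H.tgt e0)).1, card_tgt_merged_B H e0 hst hB M]
        exact (hM (H.src e0)).1
      · rw [card_src_merged_B' H e0 hst hB M (hM (H.tgt e0)).1]
        exact (hM (H.src e0)).2
  case neg =>
  by_cases hv2 : v = H.tgt e0
  case pos =>
    subst hv2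
    rw [class_t_eq_s]
    rcases hAB with hA | hB
    · refine ⟨?_, ?_⟩
      · rw [card_src_merged_A H e0 hst hA M, card_tgt_merged_A H e0 hst hA M (hM (H.src e0)).1]
        exact (hM (H.tgt e0)).1
      · rw [card_src_merged_A H e0 hst hA M]
        exact (hM (H.tgt e0)).2
    · refine ⟨?_, ?_⟩
      · rw [card_src_merged_B' H e0 hst hB M (hM (H.tgt e0)).1, card_tgt_merged_B H e0 hst hB M]
        exact (hM (H.src e0)).1
      · rw [card_src_merged_B' H e0 hst hB M (hM (H.tgt e0)).1]
        exact (hM (H.src e0)).2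
  case neg =>
    rw [card_src_unmerged H e0 M v hv1 hv2, card_tgt_unmerged H e0 M v hv1 hv2]
    exact hM v

open Classical in
lemma inj_helper (hc : H.Contractible e0) (L1 L2 : Set H.E)
    (h1 : H.IsLinear L1) (h2 : H.IsLinear L2)
    (heq : ({e | e.1 ∈ L1} : Set (H.contract e0).E) = {e | e.1 ∈ L2}) : L1 = L2 := by
  obtain ⟨hst, hAB⟩ := hc
  have hmem : ∀ e : H.E, e ≠ e0 → (e ∈ L1 ↔ e ∈ L2) := by
    intro e he
    have := Set.ext_iff.mp heq (⟨e, he⟩ : (H.contract e0).E)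
    exact this
  have h0 : e0 ∈ L1 ↔ e0 ∈ L2 := by
    rcases hAB with hA | hB
    · have key : (if e0 ∈ L1 then 1 else 0 : ℕ) = (if e0 ∈ L2 then 1 else 0) := by
        rw [← oM_s_A H e0 hA L1, ← oM_s_A H e0 hA L2, (h1 (H.src e0)).1, (h2 (H.src e0)).1]
        apply Nat.card_congr
        apply Equiv.subtypeEquivRight
        intro e
        exact and_congr_left fun ht => hmem e fun h => hst (h ▸ ht).symm
      split_ifs at key with a b b <;> tauto
    · have key : (if e0 ∈ L1 then 1 else 0 : ℕ) = (if e0 ∈ L2 then 1 else 0) := by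
        rw [← iM_t_B H e0 hB L1, ← iM_t_B H e0 hB L2, ← (h1 (H.tgt e0)).1, ← (h2 (H.tgt e0)).1]
        apply Nat.card_congr
        apply Equiv.subtypeEquivRight
        intro e
        exact and_congr_left fun ht => hmem e fun h => hst (h ▸ ht)
      split_ifs at key with a b b <;> tauto
  ext e
  by_cases he : e = e0
  · subst he; exact h0
  · exact hmem e he

lemma card_insert_pos (L0 : Set H.E) (he : e0 ∉ L0) (P : H.E → Prop) (hP : P e0) :
    Nat.card {e : H.E // e ∈ insert e0 L0 ∧ P e} = Nat.card {e : H.E // e ∈ L0 ∧ P e} + 1 := by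
  rw [card_remove (fun e => e ∈ insert e0 L0 ∧ P e) e0 ⟨Set.mem_insert _ _, hP⟩]
  congr 1
  apply Nat.card_congr
  apply Equiv.subtypeEquivRight
  intro e
  constructor
  · rintro ⟨hne, hm, hp⟩
    rcases hm with rfl | hm
    · exact absurd rfl hne
    · exact ⟨hm, hp⟩
  · rintro ⟨hm, hp⟩
    exact ⟨fun h => he (h ▸ hm), Set.mem_insert_of_mem _ hm, hp⟩

lemma card_insert_neg (L0 : Set H.E) (P : H.E → Prop) (hP : ¬ P e0) :
    Nat.card {e : H.E // e ∈ insert e0 L0 ∧ P e} = Nat.card {e : H.E // e ∈ L0 ∧ P e} := by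
  apply Nat.card_congr
  apply Equiv.subtypeEquivRight
  intro e
  constructor
  · rintro ⟨hm, hp⟩
    rcases hm with rfl | hm
    · exact absurd hp hP
    · exact ⟨hm, hp⟩
  · rintro ⟨hm, hp⟩
    exact ⟨Set.mem_insert_of_mem _ hm, hp⟩

open Classical in
lemma surj_helper (hc : H.Contractible e0) (L' : Set (H.contract e0).E)
    (hL' : (H.contract e0).IsLinear L') :
    ∃ L : Set H.E, H.IsLinear L ∧ ({e | e.1 ∈ L} : Set (H.contract e0).E) = L' := by
  obtain ⟨hst, hAB⟩ := hc
  set L0 : Set H.E := Subtype.val '' L' with hL0def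
  have he0 : e0 ∉ L0 := by
    rintro ⟨e, _, he⟩
    exact e.2 he
  have hmem0 : ∀ e : (H.contract e0).E, (e.1 ∈ L0 ↔ e ∈ L') := by
    intro e
    constructor
    · rintro ⟨f, hf, hfe⟩
      rwa [← Subtype.ext hfe]
    · intro h
      exact ⟨e, h, rfl⟩
  have conv_src : ∀ x, Nat.card {e : (H.contract e0).E // e ∈ L' ∧ (H.contract e0).src e = x}
      = Nat.card {e : (H.contract e0).E // e.1 ∈ L0 ∧ (H.contract e0).src e = x} := fun x =>
    Nat.card_congr (Equiv.subtypeEquivRight fun e => and_congr_left fun _ => (hmem0 e).symm)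
  have conv_tgt : ∀ x, Nat.card {e : (H.contract e0).E // e ∈ L' ∧ (H.contract e0).tgt e = x}
      = Nat.card {e : (H.contract e0).E // e.1 ∈ L0 ∧ (H.contract e0).tgt e = x} := fun x =>
    Nat.card_congr (Equiv.subtypeEquivRight fun e => and_congr_left fun _ => (hmem0 e).symm)
  have unm : ∀ v : H.V, v ≠ H.src e0 → v ≠ H.tgt e0 →
      (Nat.card {e : H.E // e ∈ L0 ∧ H.src e = v} = Nat.card {e : H.E // e ∈ L0 ∧ H.tgt e = v}
        ∧ Nat.card {e : H.E // e ∈ L0 ∧ H.src e = v} ≤ 1) := by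
    intro v hv1 hv2
    have h := hL' (Quot.mk (H.mergeRel e0) v)
    erw [conv_src, conv_tgt] at h
    rwa [card_src_unmerged H e0 L0 v hv1 hv2,
      card_tgt_unmerged H e0 L0 v hv1 hv2] at h
  have hXd : Nat.card {e : H.E // e ≠ e0 ∧ (e ∈ L0 ∧ H.src e = H.src e0)}
      = Nat.card {e : H.E // e ∈ L0 ∧ H.src e = H.src e0} :=
    card_no_remove _ e0 (fun h => he0 h.1)
  have hYc : Nat.card {e : H.E // e ≠ e0 ∧ (e ∈ L0 ∧ H.tgt e = H.tgt e0)}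
      = Nat.card {e : H.E // e ∈ L0 ∧ H.tgt e = H.tgt e0} :=
    card_no_remove _ e0 (fun h => he0 h.1)
  have hmer := hL' (Quot.mk (H.mergeRel e0) (H.src e0))
  erw [conv_src, conv_tgt] at hmer
  rw [card_src_merged_split H e0 hst L0, card_tgt_merged_split H e0 hst L0,
    hXd, hYc] at hmer
  -- d + b = a + c and d + b ≤ 1 where
  -- a = in-count at s, b = out-count at t, c = in-count at t, d = out-count at s (all in L0)
  have main : (Nat.card {e : H.E // e ∈ L0 ∧ H.src e = H.src e0}
        = Nat.card {e : H.E // e ∈ L0 ∧ H.tgt e = H.src e0}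
      ∧ Nat.card {e : H.E // e ∈ L0 ∧ H.src e = H.tgt e0}
        = Nat.card {e : H.E // e ∈ L0 ∧ H.tgt e = H.tgt e0})
    ∨ (Nat.card {e : H.E // e ∈ L0 ∧ H.tgt e = H.src e0} = 1
      ∧ Nat.card {e : H.E // e ∈ L0 ∧ H.src e = H.tgt e0} = 1
      ∧ Nat.card {e : H.E // e ∈ L0 ∧ H.tgt e = H.tgt e0} = 0
      ∧ Nat.card {e : H.E // e ∈ L0 ∧ H.src e = H.src e0} = 0) := by
    rcases hAB with hA | hB
    · have hd0 : Nat.card {e : H.E // e ∈ L0 ∧ H.src e = H.src e0} = 0 :=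
        card_empty_of _ (fun e h => he0 ((out_unique H e0 hA e h.2) ▸ h.1))
      omega
    · have hc0 : Nat.card {e : H.E // e ∈ L0 ∧ H.tgt e = H.tgt e0} = 0 :=
        card_empty_of _ (fun e h => he0 ((in_unique H e0 hB e h.2) ▸ h.1))
      omega
  rcases main with ⟨hda, hbc⟩ | ⟨ha1, hb1, hc0, hd0⟩
  · refine ⟨L0, ?_, Set.ext fun e => hmem0 e⟩
    intro v
    by_cases hv1 : v = H.src e0
    · subst hv1
      exact ⟨hda, by omega⟩
    · by_cases hv2 : v = H.tgt e0
      · subst hv2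
        exact ⟨hbc, by omega⟩
      · exact unm v hv1 hv2
  · refine ⟨insert e0 L0, ?_, ?_⟩
    · intro v
      by_cases hv1 : v = H.src e0
      · subst hv1
        rw [card_insert_pos H e0 L0 he0 (fun e => H.src e = H.src e0) rfl,
          card_insert_neg H e0 L0 (fun e => H.tgt e = H.src e0) (fun h => hst h.symm)]
        omega
      · by_cases hv2 : v = H.tgt e0
        · subst hv2
          rw [card_insert_neg H e0 L0 (fun e => H.src e = H.tgt e0) hst,
            card_insert_pos H e0 L0 he0 (fun e => H.tgt e = H.tgt e0) rfl]
          omega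
        · rw [card_insert_neg H e0 L0 (fun e => H.src e = v) (fun h => hv1 h.symm),
            card_insert_neg H e0 L0 (fun e => H.tgt e = v) (fun h => hv2 h.symm)]
          exact unm v hv1 hv2
    · refine Set.ext fun e => ⟨fun h => ?_, fun h => ?_⟩
      · rcases Set.mem_insert_iff.mp h with h1 | h1
        · exact absurd h1 e.2
        · exact (hmem0 e).1 h1
      · exact Set.mem_insert_of_mem _ ((hmem0 e).2 h)

open Classical in
lemma e0_mem_of_supp (hc : H.Contractible e0) (L : Set H.E) (hL : H.IsLinear L)
    (hs : H.src e0 ∈ H.supp L) (ht : H.tgt e0 ∈ H.supp L) : e0 ∈ L := by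
  rcases hc.2 with hA | hB
  · by_contra he
    have hd : Nat.card {e : H.E // e ∈ L ∧ H.src e = H.src e0} = 0 := by
      rw [oM_s_A H e0 hA L, if_neg he]
    have hi : Nat.card {e : H.E // e ∈ L ∧ H.tgt e = H.src e0} = 0 := by
      rw [← (hL (H.src e0)).1]
      exact hd
    obtain ⟨e, heL, hor⟩ := hs
    rcases hor with h | h
    · exact forall_of_card_eq_zero _ hd e ⟨heL, h⟩
    · exact forall_of_card_eq_zero _ hi e ⟨heL, h⟩
  · by_contra he
    have hi : Nat.card {e : H.E // e ∈ L ∧ H.tgt e = H.tgt e0} = 0 := by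
      rw [iM_t_B H e0 hB L, if_neg he]
    have hd : Nat.card {e : H.E // e ∈ L ∧ H.src e = H.tgt e0} = 0 := by
      rw [(hL (H.tgt e0)).1]
      exact hi
    obtain ⟨e, heL, hor⟩ := ht
    rcases hor with h | h
    · exact forall_of_card_eq_zero _ hd e ⟨heL, h⟩
    · exact forall_of_card_eq_zero _ hi e ⟨heL, h⟩

open Classical in
lemma class_witness (hc : H.Contractible e0) (L : Set H.E) (hL : H.IsLinear L)
    (he0 : e0 ∈ L) :
    ∃ e1 : H.E, e1 ∈ L ∧ e1 ≠ e0 ∧ (H.tgt e1 = H.src e0 ∨ H.src e1 = H.tgt e0) := by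
  rcases hc.2 with hA | hB
  · have hi : Nat.card {e : H.E // e ∈ L ∧ H.tgt e = H.src e0} = 1 := by
      rw [← (hL (H.src e0)).1, oM_s_A H e0 hA L, if_pos he0]
    obtain ⟨e1, h1L, h1t⟩ := exists_of_card_eq_one _ hi
    exact ⟨e1, h1L, fun h => hc.1 (h ▸ h1t).symm, Or.inl h1t⟩
  · have ho : Nat.card {e : H.E // e ∈ L ∧ H.src e = H.tgt e0} = 1 := by
      rw [(hL (H.tgt e0)).1, iM_t_B H e0 hB L, if_pos he0]
    obtain ⟨e1, h1L, h1t⟩ := exists_of_card_eq_one _ ho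
    exact ⟨e1, h1L, fun h => hc.1 (h ▸ h1t), Or.inr h1t⟩

lemma supp_mem (hc : H.Contractible e0) (L : Set H.E) (hL : H.IsLinear L) :
    ∀ v ∈ H.supp L,
      (Quot.mk (H.mergeRel e0) v) ∈ (H.contract e0).supp {e | e.1 ∈ L} := by
  rintro v ⟨e, heL, hor⟩
  by_cases hee : e = e0
  · obtain ⟨e1, h1L, h1ne, h1or⟩ := class_witness H e0 hc L hL (hee ▸ heL)
    have hv' : v = H.src e0 ∨ v = H.tgt e0 := by
      rcases hor with h | h
      · exact Or.inl (h.symm.trans (congrArg H.src hee))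
      · exact Or.inr (h.symm.trans (congrArg H.tgt hee))
    refine ⟨⟨e1, h1ne⟩, h1L, ?_⟩
    rcases h1or with h | h
    · refine Or.inr ?_
      show Quot.mk (H.mergeRel e0) (H.tgt e1) = Quot.mk (H.mergeRel e0) v
      exact (quot_mk_eq H e0).mpr (Or.inr ⟨h ▸ Or.inl rfl, hv'⟩)
    · refine Or.inl ?_
      show Quot.mk (H.mergeRel e0) (H.src e1) = Quot.mk (H.mergeRel e0) v
      exact (quot_mk_eq H e0).mpr (Or.inr ⟨h ▸ Or.inr rfl, hv'⟩)
  · refine ⟨⟨e, hee⟩, heL, ?_⟩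
    rcases hor with h | h
    · exact Or.inl (congrArg (Quot.mk (H.mergeRel e0)) h)
    · exact Or.inr (congrArg (Quot.mk (H.mergeRel e0)) h)

lemma same_class_eq (hc : H.Contractible e0) (L : Set H.E) (hL : H.IsLinear L)
    (v w : H.V) (hv : v ∈ H.supp L) (hw : w ∈ H.supp L) (hm : H.mergeRel e0 v w) :
    Quot.mk (fun a b : H.supp L => H.LAdj L a.1 b.1) ⟨v, hv⟩ = Quot.mk _ ⟨w, hw⟩ := by
  rcases hm with rfl | ⟨h1, h2⟩
  · rfl
  · rcases h1 with rfl | rfl <;> rcases h2 with rfl | rfl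
    · rfl
    · have he0 : e0 ∈ L := e0_mem_of_supp H e0 hc L hL hv hw
      exact Quot.sound ⟨e0, he0, rfl, rfl⟩
    · have he0 : e0 ∈ L := e0_mem_of_supp H e0 hc L hL hw hv
      exact (Quot.sound ⟨e0, he0, rfl, rfl⟩).symm
    · rfl

lemma components_contract (hc : H.Contractible e0) (L : Set H.E) (hL : H.IsLinear L) :
    (H.contract e0).components {e | e.1 ∈ L} = H.components L := by
  classical
  set L' : Set (H.contract e0).E := {e | e.1 ∈ L} with hL'def
  set rH := fun a b : H.supp L => H.LAdj L a.1 b.1 with hrH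
  set rC := fun a b : (H.contract e0).supp L' => (H.contract e0).LAdj L' a.1 b.1 with hrC
  have memL' : ∀ e : (H.contract e0).E, e ∈ L' ↔ e.1 ∈ L := fun e => Iff.rfl
  -- the map on supports
  let f : H.supp L → (H.contract e0).supp L' := fun x =>
    ⟨Quot.mk (H.mergeRel e0) x.1, supp_mem H e0 hc L hL x.1 x.2⟩
  -- f respects the relations up to quotient
  have hsound : ∀ a b : H.supp L, rH a b → Quot.mk rC (f a) = Quot.mk rC (f b) := by
    rintro a b ⟨e, heL, hsrc, htgt⟩
    by_cases hee : e = e0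
    · apply congrArg
      apply Subtype.ext
      show Quot.mk (H.mergeRel e0) a.1 = Quot.mk (H.mergeRel e0) b.1
      exact (quot_mk_eq H e0).mpr (Or.inr ⟨Or.inl (hsrc.symm.trans (congrArg H.src hee)),
        Or.inr (htgt.symm.trans (congrArg H.tgt hee))⟩)
    · exact Quot.sound ⟨⟨e, hee⟩, heL,
        congrArg (Quot.mk (H.mergeRel e0)) hsrc, congrArg (Quot.mk (H.mergeRel e0)) htgt⟩
  let F : Quot rH → Quot rC := Quot.lift (fun x => Quot.mk rC (f x)) hsound
  have lift_exists : ∀ y : (H.contract e0).supp L',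
      ∃ u : H.V, ∃ hu : u ∈ H.supp L, Quot.mk (H.mergeRel e0) u = y.1 := by
    rintro ⟨yv, e, heL', hor⟩
    have heL : e.1 ∈ L := heL'
    rcases hor with h | h
    · exact ⟨H.src e.1, ⟨e.1, heL, Or.inl rfl⟩, h⟩
    · exact ⟨H.tgt e.1, ⟨e.1, heL, Or.inr rfl⟩, h⟩
  have key : ∀ x y : (H.contract e0).supp L', EqvGen rC x y →
      ∀ (v w : H.V) (hv : v ∈ H.supp L) (hw : w ∈ H.supp L),
        Quot.mk (H.mergeRel e0) v = x.1 → Quot.mk (H.mergeRel e0) w = y.1 →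
        Quot.mk rH ⟨v, hv⟩ = Quot.mk rH ⟨w, hw⟩ := by
    intro x y h
    induction h with
    | rel x y hr =>
      obtain ⟨e, heL', hsrc, htgt⟩ := hr
      have heL : e.1 ∈ L := heL'
      intro v w hv hw hxv hyw
      have hsv : H.src e.1 ∈ H.supp L := ⟨e.1, heL, Or.inl rfl⟩
      have htv : H.tgt e.1 ∈ H.supp L := ⟨e.1, heL, Or.inr rfl⟩
      have h1 : Quot.mk rH ⟨v, hv⟩ = Quot.mk rH ⟨H.src e.1, hsv⟩ :=
        same_class_eq H e0 hc L hL v _ hv hsv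
          ((quot_mk_eq H e0).mp (hxv.trans hsrc.symm))
      have h2 : Quot.mk rH ⟨H.src e.1, hsv⟩ = Quot.mk rH ⟨H.tgt e.1, htv⟩ :=
        Quot.sound ⟨e.1, heL, rfl, rfl⟩
      have h3 : Quot.mk rH ⟨H.tgt e.1, htv⟩ = Quot.mk rH ⟨w, hw⟩ :=
        same_class_eq H e0 hc L hL _ w htv hw
          ((quot_mk_eq H e0).mp (htgt.trans hyw.symm))
      exact h1.trans (h2.trans h3)
    | refl x =>
      intro v w hv hw hxv hyw
      exact same_class_eq H e0 hc L hL v w hv hw ((quot_mk_eq H e0).mp (hxv.trans hyw.symm))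
    | symm x y h ih =>
      intro v w hv hw hxv hyw
      exact (ih w v hw hv hyw hxv).symm
    | trans x y z h1 h2 ih1 ih2 =>
      intro v w hv hw hxv hzw
      obtain ⟨u, hu, huy⟩ := lift_exists y
      exact (ih1 v u hv hu hxv huy).trans (ih2 u w hu hw huy hzw)
  have hinj : Function.Injective F := by
    intro p q
    induction p using Quot.ind with
    | _ a =>
    induction q using Quot.ind with
    | _ b =>
    intro h
    have heqv : EqvGen rC (f a) (f b) := Quot.eq.mp h
    exact key (f a) (f b) heqv a.1 b.1 a.2 b.2 rfl rfl
  have hsurj : Function.Surjective F := by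
    intro y
    induction y using Quot.ind with
    | _ x =>
    obtain ⟨u, hu, huy⟩ := lift_exists x
    exact ⟨Quot.mk rH ⟨u, hu⟩, by
      show Quot.mk rC (f ⟨u, hu⟩) = Quot.mk rC x
      exact congrArg (Quot.mk rC) (Subtype.ext huy)⟩
  exact (Nat.card_eq_of_bijective F ⟨hinj, hsurj⟩).symm

end MDigraph

/-- Contracting a contractible edge `e0` of a semistable graph induces a
bijection between the linear subgraphs of `H` and those of the contracted graph,
preserving the number of components. -/
theorem linear_subgraph_bijection (H : MDigraph) (hss : H.Semistable) (e0 : H.E)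
    (hc : H.Contractible e0) :
    Set.BijOn (fun L : Set H.E => ({e | e.1 ∈ L} : Set (H.contract e0).E))
      {L | H.IsLinear L} {L' | (H.contract e0).IsLinear L'} ∧
    (∀ L : Set H.E, H.IsLinear L →
      (H.contract e0).components {e | e.1 ∈ L} = H.components L) := by
  constructor
  · refine ⟨?_, ?_, ?_⟩
    · intro L hL
      exact MDigraph.isLinear_contract H e0 hc L hL
    · intro L1 h1 L2 h2 heq
      exact MDigraph.inj_helper H e0 hc L1 L2 h1 h2 heq
    · intro L' hL'
      obtain ⟨L, hL, hfeq⟩ := MDigraph.surj_helper H e0 hc L' hL'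
      exact ⟨L, hL, hfeq⟩
  · intro L hL
    exact MDigraph.components_contract H e0 hc L hL
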